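/- For all natural numbers n ≥ 1 and r with 1 ≤ r ≤ n, −log(1 − r/(n+1)) ≤ H_n − H_{n−r}, where H_m := ∑_{k=1}^{m} 1/k is the m-th harmonic number (H_0 := 0). That is, the weight estimator α̂' = −ln(1 − r/(n+1)) is bounded above by the weight estimator α̂ = H_n − H_{n−r}. -/

import Mathlib

/-- `harmonicR m = H_m = ∑_{k=1}^m 1/k`, with `H_0 = 0`. -/
noncomputable def harmonicR (m : ℕ) : ℝ := ∑ k ∈ Finset.range m, (1 : ℝ) / (k + 1)

lemma harmonicR_succ (m : ℕ) : harmonicR (m + 1) = harmonicR m + 1 / (m + 1) := by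
  simp [harmonicR, Finset.sum_range_succ]

lemma log_aux (a b : ℕ) (h : a ≤ b) :
    Real.log (b + 1) - Real.log (a + 1) ≤ harmonicR b - harmonicR a := by
  induction b, h using Nat.le_induction with
  | base => simp
  | succ b hb ih =>
    have hpos : (0 : ℝ) < b + 1 := by positivity
    have hstep : Real.log (b + 1 + 1) - Real.log (b + 1) ≤ 1 / (b + 1) := by
      have := Real.log_le_sub_one_of_pos (x := (b + 1 + 1) / (b + 1)) (by positivity)
      rw [Real.log_div (by positivity) (by positivity)] at this
      calc Real.log (b + 1 + 1) - Real.log (b + 1) ≤ (b + 1 + 1) / (b + 1) - 1 := this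
        _ = 1 / (b + 1) := by field_simp; ring
    have := harmonicR_succ b
    push_cast
    push_cast at ih
    linarith

/-- Jensen's inequality for the two AURC weight estimators:
`α̂′ = −log(1 − r/(n+1)) ≤ H_n − H_{n−r} = α̂`. -/
theorem alpha_prime_le_alpha (n r : ℕ) (hn : 1 ≤ n) (hr1 : 1 ≤ r) (hrn : r ≤ n) :
    -Real.log (1 - (r : ℝ) / ((n : ℝ) + 1)) ≤ harmonicR n - harmonicR (n - r) := by
  have hr' : (r : ℝ) ≤ n := by exact_mod_cast hrn
  have h1 : (1 : ℝ) - (r : ℝ) / ((n : ℝ) + 1) = ((n - r : ℕ) + 1) / ((n : ℝ) + 1) := by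
    have : ((n - r : ℕ) : ℝ) = (n : ℝ) - r := by
      push_cast [Nat.cast_sub hrn]; ring
    rw [this]; field_simp; ring
  rw [h1, Real.log_div (by positivity) (by positivity)]
  have := log_aux (n - r) n (Nat.sub_le n r)
  linarith
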